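/- Let S = {x ∈ ℝ^d : f_i(x) ≥ c_i for all i = 1,…,m} be a rational polyhedron, where f_i ∈ (ℤ^d)* and c_i ∈ ℤ, and let Rec(S) = {y ∈ ℝ^d : f_i(y) ≥ 0 for all i} be its recession cone. If S is non-empty, then D(S) equals the annihilator Rec(S)^⊥ of Rec(S), and 0 < width(S) < ∞ holds if and only if dim(S) = d and dim(Rec(S)) < d. -/

import Mathlib

open Set

noncomputable section

/-- Coordinatewise cast of an integer vector into `ℝ^d`. -/
def ic {d : ℕ} (v : Fin d → ℤ) : Fin d → ℝ := fun i => (v i : ℝ)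

/-- Evaluation of an integer dual vector `v ∈ (ℤ^d)*` at a point `x ∈ ℝ^d`. -/
def ieval {d : ℕ} (v : Fin d → ℤ) (x : Fin d → ℝ) : ℝ := ∑ i, (v i : ℝ) * x i

/-- `v` is a direction in which `S` is bounded (i.e. `v ∈ D(S)`). -/
def IsBddDir {d : ℕ} (S : Set (Fin d → ℝ)) (v : Fin d → ℤ) : Prop :=
  BddAbove (ieval v '' S) ∧ BddBelow (ieval v '' S)

/-- The width of `S` in direction `v`: `sup v(S) − inf v(S)`. -/
def dirWidth {d : ℕ} (S : Set (Fin d → ℝ)) (v : Fin d → ℤ) : ℝ :=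
  sSup (ieval v '' S) - sInf (ieval v '' S)

/-- The lattice width of `S`: the infimum of the widths over all nonzero
    integer directions in which `S` is bounded (`⊤` if there is no such direction). -/
def latticeWidth {d : ℕ} (S : Set (Fin d → ℝ)) : EReal :=
  ⨅ v ∈ {v : Fin d → ℤ | v ≠ 0 ∧ IsBddDir S v}, ((dirWidth S v : ℝ) : EReal)

/-- The set `S'` of lattice width directions of `S`. -/
def widthDirs {d : ℕ} (S : Set (Fin d → ℝ)) : Set (Fin d → ℤ) :=
  {v | v ≠ 0 ∧ IsBddDir S v ∧ ((dirWidth S v : ℝ) : EReal) = latticeWidth S}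

lemma cone_carath {m : ℕ} {E : Type*} [AddCommGroup E] [Module ℝ E] (F : Fin m → E) :
    ∀ (n : ℕ) (T : Finset (Fin m)), T.card ≤ n → ∀ (lam : Fin m → ℝ), (∀ i ∈ T, 0 ≤ lam i) →
      ∃ (T' : Finset (Fin m)), T' ⊆ T ∧ LinearIndependent ℝ (fun i : T' => F i.1) ∧
        ∃ lam' : Fin m → ℝ, (∀ i ∈ T', 0 ≤ lam' i) ∧
          ∑ i ∈ T', lam' i • F i = ∑ i ∈ T, lam i • F i := by
  intro n
  induction n with
  | zero =>
    intro T hT lam hlam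
    have hTe : T = ∅ := Finset.card_eq_zero.mp (le_antisymm hT (Nat.zero_le _))
    subst hTe
    refine ⟨∅, subset_rfl, ?_, lam, by simp, rfl⟩
    have : IsEmpty ((∅ : Finset (Fin m)) : Type) := by
      simp only [Finset.isEmpty_coe_sort]
    exact linearIndependent_empty_type
  | succ n ih =>
    intro T hcard lam hlam
    by_cases hind : LinearIndependent ℝ (fun i : T => F i.1)
    · exact ⟨T, subset_rfl, hind, lam, hlam, rfl⟩
    rw [Fintype.not_linearIndependent_iff] at hind
    obtain ⟨g, hg0, i₀', hne⟩ := hind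
    -- extend g to a function on Fin m supported on T, with a positive entry
    have key : ∀ μ : Fin m → ℝ, (∃ i ∈ T, 0 < μ i) → (∑ i ∈ T, μ i • F i = 0) →
        ∃ (T' : Finset (Fin m)), T' ⊆ T ∧ LinearIndependent ℝ (fun i : T' => F i.1) ∧
        ∃ lam' : Fin m → ℝ, (∀ i ∈ T', 0 ≤ lam' i) ∧
          ∑ i ∈ T', lam' i • F i = ∑ i ∈ T, lam i • F i := by
      intro μ hpos hμ0
      obtain ⟨ip, hipT, hippos⟩ := hpos
      have hPne : (T.filter (fun i => 0 < μ i)).Nonempty :=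
        ⟨ip, Finset.mem_filter.mpr ⟨hipT, hippos⟩⟩
      obtain ⟨i₀, hi₀P, hi₀min⟩ := Finset.exists_min_image _ (fun i => lam i / μ i) hPne
      rw [Finset.mem_filter] at hi₀P
      obtain ⟨hi₀T, hi₀pos⟩ := hi₀P
      set t : ℝ := lam i₀ / μ i₀ with ht
      have ht0 : 0 ≤ t := div_nonneg (hlam _ hi₀T) hi₀pos.le
      set lam' : Fin m → ℝ := fun i => lam i - t * μ i with hlam'
      have hlam'nn : ∀ i ∈ T, 0 ≤ lam' i := by
        intro i hiT
        by_cases hμi : 0 < μ i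
        · have := hi₀min i (Finset.mem_filter.mpr ⟨hiT, hμi⟩)
          have : t * μ i ≤ lam i := by
            rw [ht] at this ⊢
            calc lam i₀ / μ i₀ * μ i ≤ lam i / μ i * μ i := by
                  apply mul_le_mul_of_nonneg_right this hμi.le
              _ = lam i := div_mul_cancel₀ _ hμi.ne'
          simpa [hlam'] using sub_nonneg.mpr this
        · push_neg at hμi
          have : t * μ i ≤ 0 := mul_nonpos_of_nonneg_of_nonpos ht0 hμi
          have := hlam i hiT
          simp only [hlam']
          linarith
      have hsum' : ∑ i ∈ T, lam' i • F i = ∑ i ∈ T, lam i • F i := by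
        simp only [hlam', sub_smul, Finset.sum_sub_distrib, mul_smul]
        rw [← Finset.smul_sum, hμ0, smul_zero, sub_zero]
      have hzero : lam' i₀ = 0 := by
        simp only [hlam', ht]
        field_simp
        ring
      have herase : ∑ i ∈ T.erase i₀, lam' i • F i = ∑ i ∈ T, lam' i • F i :=
        Finset.sum_erase _ (by rw [hzero, zero_smul])
      have hcard' : (T.erase i₀).card ≤ n := by
        have := Finset.card_erase_of_mem hi₀T
        omega
      obtain ⟨T', hT'sub, hT'ind, lam'', h1, h2⟩ :=
        ih (T.erase i₀) hcard' lam' (fun i hi => hlam'nn i (Finset.mem_of_mem_erase hi))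
      exact ⟨T', hT'sub.trans (Finset.erase_subset _ _), hT'ind, lam'', h1,
        by rw [h2, herase, hsum']⟩
    set μ : Fin m → ℝ := fun i => if h : i ∈ T then g ⟨i, h⟩ else 0 with hμdef
    have hμsum : ∑ i ∈ T, μ i • F i = 0 := by
      rw [← hg0, ← Finset.sum_attach T (fun i => μ i • F i)]
      apply Finset.sum_congr rfl
      intro x _
      simp [hμdef, x.2]
    have hμne : μ i₀'.1 ≠ 0 := by simp [hμdef, i₀'.2, hne]
    rcases lt_or_gt_of_ne hμne with hneg | hpos
    · apply key (fun i => -μ i) ⟨i₀'.1, i₀'.2, by simpa using hneg⟩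
      simp only [neg_smul, Finset.sum_neg_distrib, hμsum, neg_zero]
    · exact key μ ⟨i₀'.1, i₀'.2, hpos⟩ hμsum

open RealInnerProductSpace

lemma cone_isClosed {d m : ℕ} (F : Fin m → EuclideanSpace ℝ (Fin d)) :
    IsClosed {w : EuclideanSpace ℝ (Fin d) |
      ∃ lam : Fin m → ℝ, (∀ i, 0 ≤ lam i) ∧ w = ∑ i, lam i • F i} := by
  have hrw : {w : EuclideanSpace ℝ (Fin d) |
      ∃ lam : Fin m → ℝ, (∀ i, 0 ≤ lam i) ∧ w = ∑ i, lam i • F i} =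
      ⋃ (T : Finset (Fin m)) (_ : LinearIndependent ℝ (fun i : T => F i.1)),
        (fun lam : T → ℝ => ∑ i, lam i • F i.1) '' {lam | ∀ i, 0 ≤ lam i} := by
    ext w
    simp only [Set.mem_setOf_eq, Set.mem_iUnion, Set.mem_image]
    constructor
    · rintro ⟨lam, hnn, rfl⟩
      obtain ⟨T', hsub, hind, lam', hnn', hsum⟩ :=
        cone_carath F (Finset.univ.card) Finset.univ le_rfl lam (fun i _ => hnn i)
      refine ⟨T', hind, fun i => lam' i.1, fun i => hnn' i.1 i.2, ?_⟩
      rw [← hsum]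
      rw [← Finset.sum_coe_sort T' (fun i => lam' i • F i)]
    · rintro ⟨T, hind, lam, hnn, rfl⟩
      refine ⟨fun i => if h : i ∈ T then lam ⟨i, h⟩ else 0, ?_, ?_⟩
      · intro i
        by_cases h : i ∈ T
        · simpa [h] using hnn ⟨i, h⟩
        · simp [h]
      · rw [← Finset.sum_subset (Finset.subset_univ T)
          (f := fun i => (if h : i ∈ T then lam ⟨i, h⟩ else 0) • F i)
          (by intro x _ hx; simp [hx])]
        rw [← Finset.sum_coe_sort T]
        apply Finset.sum_congr rfl
        intro x _
        simp [x.2]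
  rw [hrw]
  apply isClosed_iUnion_of_finite
  intro T
  by_cases hind : LinearIndependent ℝ (fun i : T => F i.1)
  · simp only [hind, Set.iUnion_true]
    set L : (T → ℝ) →ₗ[ℝ] EuclideanSpace ℝ (Fin d) :=
      { toFun := fun lam => ∑ i, lam i • F i.1
        map_add' := by intro a b; simp [add_smul, Finset.sum_add_distrib]
        map_smul' := by intro c a; simp [mul_smul, Finset.smul_sum] } with hL
    have hker : LinearMap.ker L = ⊥ := by
      rw [LinearMap.ker_eq_bot']
      intro g hg
      have := Fintype.linearIndependent_iff.mp hind g hg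
      funext i; exact this i
    have hce := LinearMap.isClosedEmbedding_of_injective hker
    have hcl : IsClosed {lam : T → ℝ | ∀ i, 0 ≤ lam i} := by
      have : {lam : T → ℝ | ∀ i, 0 ≤ lam i} = ⋂ i, (fun lam : T → ℝ => lam i) ⁻¹' (Set.Ici 0) := by
        ext; simp [Set.mem_iInter]
      rw [this]
      exact isClosed_iInter fun i => isClosed_Ici.preimage (continuous_apply i)
    exact hce.isClosedMap _ hcl
  · simp [hind]

lemma farkas {d m : ℕ} (F : Fin m → EuclideanSpace ℝ (Fin d)) (w : EuclideanSpace ℝ (Fin d))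
    (h : ∀ y : EuclideanSpace ℝ (Fin d), (∀ i, 0 ≤ ⟪F i, y⟫) → 0 ≤ ⟪w, y⟫) :
    ∃ lam : Fin m → ℝ, (∀ i, 0 ≤ lam i) ∧ w = ∑ i, lam i • F i := by
  by_contra hcon
  set K : ConvexCone ℝ (EuclideanSpace ℝ (Fin d)) :=
    { carrier := {w : EuclideanSpace ℝ (Fin d) |
        ∃ lam : Fin m → ℝ, (∀ i, 0 ≤ lam i) ∧ w = ∑ i, lam i • F i}
      smul_mem' := by
        rintro c hc x ⟨lam, hnn, rfl⟩
        refine ⟨fun i => c * lam i, fun i => mul_nonneg hc.le (hnn i), ?_⟩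
        rw [Finset.smul_sum]
        exact Finset.sum_congr rfl fun i _ => by rw [smul_smul]
      add_mem' := by
        rintro x ⟨lam, hnn, rfl⟩ y ⟨lam', hnn', rfl⟩
        refine ⟨fun i => lam i + lam' i, fun i => add_nonneg (hnn i) (hnn' i), ?_⟩
        rw [← Finset.sum_add_distrib]
        exact Finset.sum_congr rfl fun i _ => (add_smul (lam i) (lam' i) (F i)).symm } with hK
  have hne : (K : Set (EuclideanSpace ℝ (Fin d))).Nonempty :=
    ⟨0, ⟨0, fun i => le_rfl, by simp⟩⟩
  have hcl : IsClosed (K : Set (EuclideanSpace ℝ (Fin d))) := cone_isClosed F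
  have hwK : w ∉ K := hcon
  obtain ⟨y, hy1, hy2⟩ :=
    ProperCone.hyperplane_separation' ⟨K.toPointedCone (by exact ⟨0, fun i => le_rfl, by simp⟩), hcl⟩
      (by exact hwK)
  have hFi : ∀ i, F i ∈ K := by
    intro i
    refine ⟨fun j => if j = i then 1 else 0, fun j => by positivity, ?_⟩
    simp only [ite_smul, one_smul, zero_smul]
    rw [Finset.sum_ite_eq' Finset.univ i F]
    simp
  have h1 : ∀ i, 0 ≤ ⟪F i, y⟫ := fun i => hy1 _ (hFi i)
  have h2 := h y h1
  rw [real_inner_comm] at h2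
  rw [real_inner_comm] at hy2
  linarith

/-- The dot product `x ↦ ∑ j, u j * x j` as a linear map. -/
def dotL {d : ℕ} (u : Fin d → ℝ) : (Fin d → ℝ) →ₗ[ℝ] ℝ where
  toFun x := ∑ j, u j * x j
  map_add' a b := by simp [mul_add, Finset.sum_add_distrib]
  map_smul' t a := by simp [Finset.mul_sum, mul_left_comm]

@[simp] lemma dotL_apply {d : ℕ} (u x : Fin d → ℝ) : dotL u x = ∑ j, u j * x j := rfl

lemma euclid_inner {d : ℕ} (a b : EuclideanSpace ℝ (Fin d)) : ⟪a, b⟫ = ∑ j, a j * b j := by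
  simp [PiLp.inner_apply, RCLike.inner_apply]
  exact Finset.sum_congr rfl fun _ _ => mul_comm _ _

/-- Farkas-based boundedness: if `u` is nonpositive on the recession cone, it is
bounded above on the polyhedron. -/
lemma bddAbove_of_ann {d m : ℕ} (f : Fin m → Fin d → ℤ) (c : Fin m → ℤ) (u : Fin d → ℝ)
    (hu : ∀ y : Fin d → ℝ, (∀ i, (0:ℝ) ≤ ∑ j, (f i j : ℝ) * y j) → ∑ j, u j * y j ≤ 0) :
    BddAbove ((fun x => ∑ j, u j * x j) ''
      {x : Fin d → ℝ | ∀ i, (c i : ℝ) ≤ ∑ j, (f i j : ℝ) * x j}) := by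
  set F : Fin m → EuclideanSpace ℝ (Fin d) := fun i => WithLp.toLp 2 (fun j => (f i j : ℝ)) with hFdef
  set w : EuclideanSpace ℝ (Fin d) := WithLp.toLp 2 (fun j => -(u j)) with hwdef
  have hsep : ∀ y : EuclideanSpace ℝ (Fin d), (∀ i, 0 ≤ ⟪F i, y⟫) → 0 ≤ ⟪w, y⟫ := by
    intro y hy
    rw [euclid_inner]
    have h1 : ∑ j, u j * y j ≤ 0 := by
      apply hu
      intro i
      have := hy i
      rwa [euclid_inner] at this
    have hrw : ∑ j, w j * y j = -∑ j, u j * y j := by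
      simp [hwdef, neg_mul]
    rw [hrw]
    linarith
  obtain ⟨lam, hnn, hw⟩ := farkas F w hsep
  have hw' : (fun j => -(u j) : Fin d → ℝ) =
      ∑ i, lam i • (fun j => (f i j : ℝ) : Fin d → ℝ) := by
    have := congrArg WithLp.ofLp hw
    simpa [hwdef, hFdef] using this
  have huj : ∀ j, u j = -∑ i, lam i * (f i j : ℝ) := by
    intro j
    have := congrFun hw' j
    simp only [Finset.sum_apply, Pi.smul_apply, smul_eq_mul] at this
    linarith [this]
  have hval : ∀ x : Fin d → ℝ,
      ∑ j, u j * x j = -∑ i, lam i * ∑ j, (f i j : ℝ) * x j := by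
    intro x
    calc ∑ j, u j * x j = ∑ j, (-∑ i, lam i * (f i j : ℝ)) * x j :=
          Finset.sum_congr rfl fun j _ => by rw [← huj j]
      _ = -∑ j, ∑ i, (lam i * (f i j : ℝ)) * x j := by
          simp [neg_mul, Finset.sum_mul]
      _ = -∑ i, ∑ j, (lam i * (f i j : ℝ)) * x j := by rw [Finset.sum_comm]
      _ = -∑ i, lam i * ∑ j, (f i j : ℝ) * x j := by
          congr 1
          exact Finset.sum_congr rfl fun i _ => by rw [Finset.mul_sum]; simp [mul_assoc]
  refine ⟨-∑ i, lam i * (c i : ℝ), ?_⟩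
  rintro r ⟨x, hx, rfl⟩
  simp only [Set.mem_setOf_eq] at hx
  dsimp only
  rw [hval x]
  apply neg_le_neg
  exact Finset.sum_le_sum fun i _ => mul_le_mul_of_nonneg_left (hx i) (hnn i)
lemma sum_expand {d : ℕ} (a y z : Fin d → ℝ) (t : ℝ) :
    ∑ j, a j * (y + t • z) j = ∑ j, a j * y j + t * ∑ j, a j * z j := by
  simp [mul_add, Finset.sum_add_distrib, Finset.mul_sum, mul_left_comm]

lemma sum_single_eval {d : ℕ} (a : Fin d → ℝ) (j : Fin d) :
    ∑ k, a k * (Pi.single j 1 : Fin d → ℝ) k = a j := by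
  simp [Pi.single_apply, mul_ite, Finset.sum_ite_eq]

/-- If every constraint that is not identically zero on the recession cone can be made
strictly positive, then the recession cone spans everything. -/
lemma span_rec_top {d m : ℕ} (f : Fin m → Fin d → ℤ) (Rec : Set (Fin d → ℝ))
    (hRec : Rec = {y : Fin d → ℝ | ∀ i, 0 ≤ ∑ j, (f i j : ℝ) * y j})
    (hst : ∀ i, f i ≠ 0 → ∃ y ∈ Rec, (0:ℝ) < ∑ j, (f i j : ℝ) * y j) :
    Submodule.span ℝ Rec = ⊤ := by
  have hmem : ∀ y, y ∈ Rec ↔ ∀ i, (0:ℝ) ≤ ∑ j, (f i j : ℝ) * y j := by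
    rw [hRec]; intro y; rfl
  have hchoice : ∀ i, ∃ y, y ∈ Rec ∧ (f i ≠ 0 → (0:ℝ) < ∑ j, (f i j : ℝ) * y j) := by
    intro i
    by_cases h : f i ≠ 0
    · obtain ⟨y, hy, hlt⟩ := hst i h
      exact ⟨y, hy, fun _ => hlt⟩
    · exact ⟨0, by rw [hmem]; intro i; simp, fun h' => absurd h' h⟩
  choose yc hycR hyclt using hchoice
  set ystar : Fin d → ℝ := ∑ i, yc i with hystar
  have hyR : ystar ∈ Rec := by
    rw [hmem]
    intro i
    have : ∑ j, (f i j : ℝ) * ystar j = ∑ k, ∑ j, (f i j : ℝ) * yc k j := by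
      rw [Finset.sum_comm]
      apply Finset.sum_congr rfl
      intro j _
      simp [hystar, Finset.mul_sum]
    rw [this]
    exact Finset.sum_nonneg fun k _ => (hmem (yc k)).mp (hycR k) i
  have hypos : ∀ i, f i ≠ 0 → (0:ℝ) < ∑ j, (f i j : ℝ) * ystar j := by
    intro i hi
    have hrw : ∑ j, (f i j : ℝ) * ystar j = ∑ k, ∑ j, (f i j : ℝ) * yc k j := by
      rw [Finset.sum_comm]
      apply Finset.sum_congr rfl
      intro j _
      simp [hystar, Finset.mul_sum]
    rw [hrw]
    apply Finset.sum_pos' (fun k _ => (hmem (yc k)).mp (hycR k) i)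
    exact ⟨i, Finset.mem_univ i, hyclt i hi⟩
  rw [eq_top_iff]
  rintro z -
  set P : Finset (Fin m) := Finset.univ.filter (fun i => f i ≠ 0) with hP
  set t : ℝ := if hPne : P.Nonempty then
      P.inf' hPne (fun i => (∑ j, (f i j : ℝ) * ystar j) / (1 + |∑ j, (f i j : ℝ) * z j|))
    else 1 with ht
  have htpos : 0 < t := by
    rw [ht]
    split_ifs with hPne
    · rw [Finset.lt_inf'_iff]
      intro i hi
      rw [hP, Finset.mem_filter] at hi
      exact div_pos (hypos i hi.2) (by positivity)
    · exact one_pos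
  have hmemRec : ystar + t • z ∈ Rec := by
    rw [hmem]
    intro i
    rw [sum_expand]
    by_cases hfi : f i = 0
    · have h0 : ∀ j, (f i j : ℝ) = 0 := fun j => by
        rw [show f i j = 0 from congrFun hfi j]; simp
      simp [h0]
    · have hiP : i ∈ P := by rw [hP, Finset.mem_filter]; exact ⟨Finset.mem_univ i, hfi⟩
      have hle : t ≤ (∑ j, (f i j : ℝ) * ystar j) / (1 + |∑ j, (f i j : ℝ) * z j|) := by
        rw [ht]
        split_ifs with hPne
        · exact Finset.inf'_le _ hiP
        · exact absurd ⟨i, hiP⟩ hPne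
      have hden : (0:ℝ) < 1 + |∑ j, (f i j : ℝ) * z j| := by positivity
      have hkey : t * (1 + |∑ j, (f i j : ℝ) * z j|) ≤ ∑ j, (f i j : ℝ) * ystar j :=
        (le_div_iff₀ hden).mp hle
      have habs : |t * ∑ j, (f i j : ℝ) * z j| ≤ t * (1 + |∑ j, (f i j : ℝ) * z j|) := by
        rw [abs_mul, abs_of_pos htpos]
        apply mul_le_mul_of_nonneg_left _ htpos.le
        linarith [abs_nonneg (∑ j, (f i j : ℝ) * z j)]
      have := neg_abs_le (t * ∑ j, (f i j : ℝ) * z j)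
      linarith
  have h1 : ystar + t • z ∈ Submodule.span ℝ Rec := Submodule.subset_span hmemRec
  have h2 : ystar ∈ Submodule.span ℝ Rec := Submodule.subset_span hyR
  have h3 : t • z ∈ Submodule.span ℝ Rec := by
    have := Submodule.sub_mem _ h1 h2
    rwa [add_sub_cancel_left] at this
  have h4 := Submodule.smul_mem _ t⁻¹ h3
  rwa [smul_smul, inv_mul_cancel₀ htpos.ne', one_smul] at h4

/-- If every nonzero constraint can be made strict somewhere on `S`, then `S` contains a
small cube around some point. -/
lemma cube_in_poly {d m : ℕ} (f : Fin m → Fin d → ℤ) (c : Fin m → ℤ) (S : Set (Fin d → ℝ))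
    (hS : S = {x : Fin d → ℝ | ∀ i, (c i : ℝ) ≤ ∑ j, (f i j : ℝ) * x j})
    (x₀ : Fin d → ℝ) (hx₀ : x₀ ∈ S)
    (hst : ∀ i, f i ≠ 0 → ∃ x ∈ S, (c i : ℝ) < ∑ j, (f i j : ℝ) * x j) :
    ∃ xs ∈ S, ∃ ε : ℝ, 0 < ε ∧
      ∀ (j : Fin d) (t : ℝ), |t| ≤ ε → xs + t • (Pi.single j 1 : Fin d → ℝ) ∈ S := by
  have hmem : ∀ x, x ∈ S ↔ ∀ i, (c i : ℝ) ≤ ∑ j, (f i j : ℝ) * x j := by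
    rw [hS]; intro x; rfl
  have hchoice : ∀ i, ∃ x, x ∈ S ∧ (f i ≠ 0 → (c i : ℝ) < ∑ j, (f i j : ℝ) * x j) := by
    intro i
    by_cases h : f i ≠ 0
    · obtain ⟨x, hx, hlt⟩ := hst i h
      exact ⟨x, hx, fun _ => hlt⟩
    · exact ⟨x₀, hx₀, fun h' => absurd h' h⟩
  choose xc hxcS hxclt using hchoice
  have hN : (0:ℝ) < (m:ℝ) + 1 := by positivity
  set xs : Fin d → ℝ := ((m:ℝ) + 1)⁻¹ • (x₀ + ∑ k, xc k) with hxs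
  have hval : ∀ a : Fin d → ℝ, ∑ j, a j * xs j =
      ((m:ℝ) + 1)⁻¹ * (∑ j, a j * x₀ j + ∑ k, ∑ j, a j * xc k j) := by
    intro a
    have := map_smul (dotL a) ((m:ℝ) + 1)⁻¹ (x₀ + ∑ k, xc k)
    rw [map_add (dotL a), map_sum (dotL a)] at this
    simpa only [dotL_apply, smul_eq_mul] using this
  have hge : ∀ i, ((m:ℝ) + 1) * (c i : ℝ) ≤ ∑ j, (f i j : ℝ) * x₀ j + ∑ k, ∑ j, (f i j : ℝ) * xc k j := by
    intro i
    have h1 : (m:ℝ) * (c i : ℝ) ≤ ∑ k, ∑ j, (f i j : ℝ) * xc k j := by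
      calc (m:ℝ) * (c i : ℝ) = ∑ _k : Fin m, (c i : ℝ) := by
            rw [Finset.sum_const]; simp [mul_comm]
        _ ≤ _ := Finset.sum_le_sum fun k _ => (hmem (xc k)).mp (hxcS k) i
    have h2 := (hmem x₀).mp hx₀ i
    linarith
  have hxsS : xs ∈ S := by
    rw [hmem]
    intro i
    rw [hval]
    have := mul_le_mul_of_nonneg_left (hge i) (inv_nonneg.mpr hN.le)
    rwa [← mul_assoc, inv_mul_cancel₀ hN.ne', one_mul] at this
  have hstrict : ∀ i, f i ≠ 0 → (c i : ℝ) < ∑ j, (f i j : ℝ) * xs j := by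
    intro i hfi
    rw [hval]
    have h1 : (m:ℝ) * (c i : ℝ) < ∑ k, ∑ j, (f i j : ℝ) * xc k j := by
      have : ∑ _k : Fin m, (c i : ℝ) < ∑ k, ∑ j, (f i j : ℝ) * xc k j :=
        Finset.sum_lt_sum (fun k _ => (hmem (xc k)).mp (hxcS k) i)
          ⟨i, Finset.mem_univ i, hxclt i hfi⟩
      calc (m:ℝ) * (c i : ℝ) = ∑ _k : Fin m, (c i : ℝ) := by
            rw [Finset.sum_const]; simp [mul_comm]
        _ < _ := this
    have h2 := (hmem x₀).mp hx₀ i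
    have h3 : ((m:ℝ) + 1) * (c i : ℝ) < ∑ j, (f i j : ℝ) * x₀ j + ∑ k, ∑ j, (f i j : ℝ) * xc k j := by
      linarith
    have := mul_lt_mul_of_pos_left h3 (inv_pos.mpr hN)
    rwa [← mul_assoc, inv_mul_cancel₀ hN.ne', one_mul] at this
  refine ⟨xs, hxsS, ?_⟩
  set P : Finset (Fin m) := Finset.univ.filter (fun i => f i ≠ 0) with hP
  set ε : ℝ := if hPne : P.Nonempty then
      P.inf' hPne (fun i => (∑ j, (f i j : ℝ) * xs j - (c i : ℝ)) / (1 + ∑ j, |(f i j : ℝ)|))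
    else 1 with hε
  have hεpos : 0 < ε := by
    rw [hε]
    split_ifs with hPne
    · rw [Finset.lt_inf'_iff]
      intro i hi
      rw [hP, Finset.mem_filter] at hi
      have := hstrict i hi.2
      apply div_pos (by linarith) (by positivity)
    · exact one_pos
  refine ⟨ε, hεpos, ?_⟩
  intro j t ht
  rw [hmem]
  intro i
  rw [sum_expand, sum_single_eval]
  by_cases hfi : f i = 0
  · have h0 : ∀ j', (f i j' : ℝ) = 0 := fun j' => by
      rw [show f i j' = 0 from congrFun hfi j']; simp
    have h2 := (hmem x₀).mp hx₀ i
    have h3 : ∑ j', (f i j' : ℝ) * x₀ j' = 0 := by simp [h0]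
    simp only [h0, zero_mul, Finset.sum_const_zero, mul_zero, add_zero]
    linarith
  · have hiP : i ∈ P := by rw [hP, Finset.mem_filter]; exact ⟨Finset.mem_univ i, hfi⟩
    have hle : ε ≤ (∑ j, (f i j : ℝ) * xs j - (c i : ℝ)) / (1 + ∑ j', |(f i j' : ℝ)|) := by
      rw [hε]
      split_ifs with hPne
      · exact Finset.inf'_le _ hiP
      · exact absurd ⟨i, hiP⟩ hPne
    have hden : (0:ℝ) < 1 + ∑ j', |(f i j' : ℝ)| := by positivity
    have hkey : ε * (1 + ∑ j', |(f i j' : ℝ)|) ≤ ∑ j, (f i j : ℝ) * xs j - (c i : ℝ) :=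
      (le_div_iff₀ hden).mp hle
    have habs1 : |(f i j : ℝ)| ≤ 1 + ∑ j', |(f i j' : ℝ)| := by
      have : |(f i j : ℝ)| ≤ ∑ j', |(f i j' : ℝ)| :=
        Finset.single_le_sum (f := fun j' => |(f i j' : ℝ)|)
          (fun j' _ => abs_nonneg _) (Finset.mem_univ j)
      linarith
    have habs : |t * (f i j : ℝ)| ≤ ε * (1 + ∑ j', |(f i j' : ℝ)|) := by
      rw [abs_mul]
      exact mul_le_mul ht habs1 (abs_nonneg _) hεpos.le
    have := neg_abs_le (t * (f i j : ℝ))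
    linarith
theorem rational_polyhedron_width {d m : ℕ} (f : Fin m → Fin d → ℤ) (c : Fin m → ℤ)
    (S : Set (Fin d → ℝ))
    (hS : S = {x : Fin d → ℝ | ∀ i, (c i : ℝ) ≤ ∑ j, (f i j : ℝ) * x j})
    (hne : S.Nonempty)
    (Rec : Set (Fin d → ℝ))
    (hRec : Rec = {y : Fin d → ℝ | ∀ i, 0 ≤ ∑ j, (f i j : ℝ) * y j}) :
    {u : Fin d → ℝ |
        BddAbove ((fun x => ∑ j, u j * x j) '' S) ∧
        BddBelow ((fun x => ∑ j, u j * x j) '' S)} =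
      {u : Fin d → ℝ | ∀ y ∈ Rec, ∑ j, u j * y j = 0} ∧
    (((0 : EReal) < latticeWidth S ∧ latticeWidth S < ⊤) ↔
      (affineSpan ℝ S = ⊤ ∧ Module.finrank ℝ (Submodule.span ℝ Rec) < d)) := by
  classical
  obtain ⟨x₀, hx₀mem⟩ := hne
  have hmemS : ∀ x, x ∈ S ↔ ∀ i, (c i : ℝ) ≤ ∑ j, (f i j : ℝ) * x j := by
    rw [hS]; intro x; rfl
  have hmemR : ∀ y, y ∈ Rec ↔ ∀ i, (0:ℝ) ≤ ∑ j, (f i j : ℝ) * y j := by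
    rw [hRec]; intro y; rfl
  have hx₀ := (hmemS x₀).mp hx₀mem
  -- rays stay in S
  have hRay : ∀ x ∈ S, ∀ y ∈ Rec, ∀ t : ℝ, 0 ≤ t → x + t • y ∈ S := by
    intro x hx y hy t ht
    rw [hmemS] at hx ⊢
    rw [hmemR] at hy
    intro i
    rw [sum_expand]
    have := mul_nonneg ht (hy i)
    linarith [hx i]
  -- bounded above implies nonpositive on Rec
  have hAnnAbove : ∀ u : Fin d → ℝ, BddAbove ((fun x => ∑ j, u j * x j) '' S) →
      ∀ y ∈ Rec, ∑ j, u j * y j ≤ 0 := by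
    rintro u ⟨M, hM⟩ y hy
    by_contra hpos
    push_neg at hpos
    set t : ℝ := max ((M - ∑ j, u j * x₀ j + 1) / ∑ j, u j * y j) 0 with htdef
    have ht : (0:ℝ) ≤ t := le_max_right _ _
    have hb : ∑ j, u j * (x₀ + t • y) j ≤ M :=
      hM ⟨x₀ + t • y, hRay x₀ hx₀mem y hy t ht, rfl⟩
    rw [sum_expand] at hb
    have h2 : (M - ∑ j, u j * x₀ j + 1) / ∑ j, u j * y j ≤ t := le_max_left _ _
    have h3 := mul_le_mul_of_nonneg_right h2 hpos.le
    rw [div_mul_cancel₀ _ hpos.ne'] at h3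
    linarith
  -- bddAbove of negated functional gives bddBelow
  have hbdd_neg : ∀ u : Fin d → ℝ, BddAbove ((fun x => ∑ j, (fun k => -u k) j * x j) '' S) →
      BddBelow ((fun x => ∑ j, u j * x j) '' S) := by
    rintro u ⟨M, hM⟩
    refine ⟨-M, ?_⟩
    rintro r ⟨x, hx, rfl⟩
    have h1 : ∑ j, -u j * x j ≤ M := hM ⟨x, hx, rfl⟩
    have hsum : ∑ j, -u j * x j = -∑ j, u j * x j := by simp [neg_mul]
    rw [hsum] at h1
    show -M ≤ ∑ j, u j * x j
    linarith
  have hbdd_neg' : ∀ u : Fin d → ℝ, BddBelow ((fun x => ∑ j, u j * x j) '' S) →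
      BddAbove ((fun x => ∑ j, (fun k => -u k) j * x j) '' S) := by
    rintro u ⟨M, hM⟩
    refine ⟨-M, ?_⟩
    rintro r ⟨x, hx, rfl⟩
    have h1 : M ≤ ∑ j, u j * x j := hM ⟨x, hx, rfl⟩
    show ∑ j, -u j * x j ≤ -M
    have hsum : ∑ j, -u j * x j = -∑ j, u j * x j := by simp [neg_mul]
    rw [hsum]
    linarith
  -- Part 1
  have part1 : {u : Fin d → ℝ |
        BddAbove ((fun x => ∑ j, u j * x j) '' S) ∧
        BddBelow ((fun x => ∑ j, u j * x j) '' S)} =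
      {u : Fin d → ℝ | ∀ y ∈ Rec, ∑ j, u j * y j = 0} := by
    ext u
    simp only [Set.mem_setOf_eq]
    constructor
    · rintro ⟨ha, hb⟩ y hy
      have h1 := hAnnAbove u ha y hy
      have h2 := hAnnAbove (fun k => -u k) (hbdd_neg' u hb) y hy
      have h3 : ∑ j, -u j * y j = -∑ j, u j * y j := by simp [neg_mul]
      rw [h3] at h2
      linarith
    · intro hann
      have ha : BddAbove ((fun x => ∑ j, u j * x j) '' S) := by
        rw [hS]
        exact bddAbove_of_ann f c u (fun y hy => (hann y ((hmemR y).mpr hy)).le)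
      have hbneg : BddAbove ((fun x => ∑ j, (fun k => -u k) j * x j) '' S) := by
        rw [hS]
        apply bddAbove_of_ann f c (fun k => -u k)
        intro y hy
        have h1 := hann y ((hmemR y).mpr hy)
        have h3 : ∑ j, -u j * y j = -∑ j, u j * y j := by simp [neg_mul]
        rw [h3, h1]
        simp
      exact ⟨ha, hbdd_neg u hbneg⟩
  refine ⟨part1, ?_⟩
  -- bounded directions annihilate Rec
  have hDirAnn : ∀ v : Fin d → ℤ, IsBddDir S v → ∀ y ∈ Rec, ∑ j, (v j : ℝ) * y j = 0 := by
    intro v hv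
    have hmem : (fun k => ((v k : ℝ))) ∈ {u : Fin d → ℝ |
        BddAbove ((fun x => ∑ j, u j * x j) '' S) ∧
        BddBelow ((fun x => ∑ j, u j * x j) '' S)} := hv
    rw [part1] at hmem
    exact hmem
  -- annihilating integer constraints are bounded directions
  have hDirBdd : ∀ i : Fin m, (∀ y ∈ Rec, ∑ j, (f i j : ℝ) * y j = 0) → IsBddDir S (f i) := by
    intro i hann
    constructor
    · have h1 : BddAbove ((fun x => ∑ j, (fun k => ((f i k : ℝ))) j * x j) '' S) := by
        rw [hS]
        exact bddAbove_of_ann f c _ (fun y hy => (hann y ((hmemR y).mpr hy)).le)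
      exact h1
    · refine ⟨(c i : ℝ), ?_⟩
      rintro r ⟨x, hx, rfl⟩
      exact (hmemS x).mp hx i
  -- implicit equality with nonzero functional prevents full dimension
  have hntop_of_imp : ∀ i : Fin m, f i ≠ 0 →
      (∀ x ∈ S, ∑ j, (f i j : ℝ) * x j = (c i : ℝ)) → affineSpan ℝ S ≠ ⊤ := by
    intro i hfi hconst htop
    obtain ⟨j₀, hj₀⟩ := Function.ne_iff.mp hfi
    set u : Fin d → ℝ := fun k => (f i k : ℝ) with hu
    have hvs : vectorSpan ℝ S ≤ LinearMap.ker (dotL u) := by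
      rw [vectorSpan_def]
      apply Submodule.span_le.mpr
      rintro w ⟨x, hx, y, hy, rfl⟩
      rw [SetLike.mem_coe, LinearMap.mem_ker]
      have heq : dotL u (x -ᵥ y) = dotL u x - dotL u y := by rw [vsub_eq_sub, map_sub]
      rw [heq]
      have e1 : dotL u x = (c i : ℝ) := hconst x hx
      have e2 : dotL u y = (c i : ℝ) := hconst y hy
      rw [e1, e2, sub_self]
    have h2 : vectorSpan ℝ S = ⊤ := by
      rw [← direction_affineSpan, htop, AffineSubspace.direction_top]
    rw [h2, top_le_iff] at hvs
    have h3 : dotL u (Pi.single j₀ 1 : Fin d → ℝ) = 0 := by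
      rw [← LinearMap.mem_ker, hvs]; trivial
    rw [dotL_apply, sum_single_eval] at h3
    exact (Int.cast_ne_zero.mpr hj₀) h3
  -- a cube inside S gives full dimension
  have htop_of_cube : ∀ xs ∈ S, ∀ ε : ℝ, 0 < ε →
      (∀ (j : Fin d) (t : ℝ), |t| ≤ ε → xs + t • (Pi.single j 1 : Fin d → ℝ) ∈ S) →
      affineSpan ℝ S = ⊤ := by
    intro xs hxs ε hε hcube
    have hnonempty : (affineSpan ℝ S : Set (Fin d → ℝ)).Nonempty :=
      ⟨xs, subset_affineSpan ℝ S hxs⟩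
    rw [← AffineSubspace.direction_eq_top_iff_of_nonempty hnonempty, direction_affineSpan]
    rw [eq_top_iff]
    rintro x -
    have hsingle : ∀ j : Fin d, (Pi.single j 1 : Fin d → ℝ) ∈ vectorSpan ℝ S := by
      intro j
      have h1 : xs + ε • (Pi.single j 1 : Fin d → ℝ) ∈ S := hcube j ε (by rw [abs_of_pos hε])
      have h2 := vsub_mem_vectorSpan ℝ h1 hxs
      rw [vsub_eq_sub, add_sub_cancel_left] at h2
      have h3 := Submodule.smul_mem _ ε⁻¹ h2
      rwa [smul_smul, inv_mul_cancel₀ hε.ne', one_smul] at h3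
    have hx : x = ∑ j, x j • (Pi.single j 1 : Fin d → ℝ) := by
      have hsm : ∀ j, x j • (Pi.single j 1 : Fin d → ℝ) = Pi.single j (x j) := by
        intro j
        rw [← Pi.single_smul, smul_eq_mul, mul_one]
      rw [Finset.sum_congr rfl fun j _ => hsm j, Finset.univ_sum_single]
    rw [hx]
    exact Submodule.sum_mem _ fun j _ => Submodule.smul_mem _ _ (hsingle j)
  constructor
  · rintro ⟨hpos, hfin⟩
    constructor
    · -- full dimensional
      by_contra hnt
      have himp : ∃ i, f i ≠ 0 ∧ ∀ x ∈ S, ∑ j, (f i j : ℝ) * x j = (c i : ℝ) := by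
        by_contra hno
        push_neg at hno
        apply hnt
        have hst : ∀ i, f i ≠ 0 → ∃ x ∈ S, (c i:ℝ) < ∑ j, (f i j:ℝ) * x j := by
          intro i hfi
          obtain ⟨x, hx, hne'⟩ := hno i hfi
          exact ⟨x, hx, lt_of_le_of_ne ((hmemS x).mp hx i) (Ne.symm hne')⟩
        obtain ⟨xs, hxs, ε, hε, hcube⟩ := cube_in_poly f c S hS x₀ hx₀mem hst
        exact htop_of_cube xs hxs ε hε hcube
      obtain ⟨i, hfi, hconst⟩ := himp
      have himg : ieval (f i) '' S = {(c i : ℝ)} := by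
        apply Set.eq_singleton_iff_nonempty_unique_mem.mpr
        refine ⟨⟨ieval (f i) x₀, ⟨x₀, hx₀mem, rfl⟩⟩, ?_⟩
        rintro r ⟨x, hx, rfl⟩
        exact hconst x hx
      have hbdd : IsBddDir S (f i) := by
        constructor
        · show BddAbove (ieval (f i) '' S)
          rw [himg]; exact bddAbove_singleton
        · show BddBelow (ieval (f i) '' S)
          rw [himg]; exact bddBelow_singleton
      have hw0 : dirWidth S (f i) = 0 := by
        rw [dirWidth, himg, csSup_singleton, csInf_singleton, sub_self]
      have hle : latticeWidth S ≤ ((0:ℝ) : EReal) := by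
        rw [← hw0]
        exact iInf₂_le (f i) ⟨hfi, hbdd⟩
      rw [EReal.coe_zero] at hle
      exact absurd (lt_of_lt_of_le hpos hle) (lt_irrefl 0)
    · -- recession cone not full dimensional
      have hvex : ∃ v : Fin d → ℤ, v ≠ 0 ∧ IsBddDir S v := by
        by_contra hno
        push_neg at hno
        have hempty : {v : Fin d → ℤ | v ≠ 0 ∧ IsBddDir S v} = ∅ :=
          Set.eq_empty_iff_forall_notMem.mpr fun v hv => hno v hv.1 hv.2
        rw [latticeWidth, hempty] at hfin
        simp at hfin
      obtain ⟨v, hv0, hvb⟩ := hvex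
      obtain ⟨j, hj⟩ := Function.ne_iff.mp hv0
      set u : Fin d → ℝ := fun k => (v k : ℝ) with hu
      have hker : Submodule.span ℝ Rec ≤ LinearMap.ker (dotL u) := by
        apply Submodule.span_le.mpr
        intro y hy
        rw [SetLike.mem_coe, LinearMap.mem_ker]
        exact hDirAnn v hvb y hy
      have hkt : LinearMap.ker (dotL u) ≠ ⊤ := by
        intro h
        have h3 : dotL u (Pi.single j 1 : Fin d → ℝ) = 0 := by
          rw [← LinearMap.mem_ker, h]; trivial
        rw [dotL_apply, sum_single_eval] at h3
        exact (Int.cast_ne_zero.mpr hj) h3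
      calc Module.finrank ℝ (Submodule.span ℝ Rec)
          ≤ Module.finrank ℝ (LinearMap.ker (dotL u)) := Submodule.finrank_mono hker
        _ < Module.finrank ℝ (Fin d → ℝ) := Submodule.finrank_lt hkt
        _ = d := by simp
  · rintro ⟨htop, hrk⟩
    constructor
    · -- positive width
      have hst : ∀ i, f i ≠ 0 → ∃ x ∈ S, (c i:ℝ) < ∑ j, (f i j:ℝ) * x j := by
        intro i hfi
        by_contra hno
        push_neg at hno
        exact hntop_of_imp i hfi
          (fun x hx => le_antisymm (hno x hx) ((hmemS x).mp hx i)) htop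
      obtain ⟨xs, hxs, ε, hε, hcube⟩ := cube_in_poly f c S hS x₀ hx₀mem hst
      have hlow : ∀ v : Fin d → ℤ, v ≠ 0 → IsBddDir S v → ε ≤ dirWidth S v := by
        intro v hv0 hvb
        obtain ⟨j, hj⟩ := Function.ne_iff.mp hv0
        have hp : xs + ε • (Pi.single j 1 : Fin d → ℝ) ∈ S := hcube j ε (by rw [abs_of_pos hε])
        have hq : xs + (-ε) • (Pi.single j 1 : Fin d → ℝ) ∈ S :=
          hcube j (-ε) (by rw [abs_neg, abs_of_pos hε])
        have hvp : ieval v (xs + ε • (Pi.single j 1 : Fin d → ℝ)) = ieval v xs + ε * (v j : ℝ) := by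
          show ∑ k, (v k : ℝ) * (xs + ε • (Pi.single j 1 : Fin d → ℝ)) k = _
          rw [sum_expand, sum_single_eval]; rfl
        have hvq : ieval v (xs + (-ε) • (Pi.single j 1 : Fin d → ℝ))
            = ieval v xs + (-ε) * (v j : ℝ) := by
          show ∑ k, (v k : ℝ) * (xs + (-ε) • (Pi.single j 1 : Fin d → ℝ)) k = _
          rw [sum_expand, sum_single_eval]; rfl
        have h1 : ieval v (xs + ε • (Pi.single j 1 : Fin d → ℝ)) ≤ sSup (ieval v '' S) :=
          le_csSup hvb.1 ⟨_, hp, rfl⟩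
        have h2 : sInf (ieval v '' S) ≤ ieval v (xs + (-ε) • (Pi.single j 1 : Fin d → ℝ)) :=
          csInf_le hvb.2 ⟨_, hq, rfl⟩
        have h1' : ieval v (xs + (-ε) • (Pi.single j 1 : Fin d → ℝ)) ≤ sSup (ieval v '' S) :=
          le_csSup hvb.1 ⟨_, hq, rfl⟩
        have h2' : sInf (ieval v '' S) ≤ ieval v (xs + ε • (Pi.single j 1 : Fin d → ℝ)) :=
          csInf_le hvb.2 ⟨_, hp, rfl⟩
        have hone : (1:ℝ) ≤ |(v j : ℝ)| := by
          rw [← Int.cast_abs]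
          exact_mod_cast Int.one_le_abs hj
        rw [dirWidth]
        rcases le_total 0 ((v j : ℝ)) with hsg | hsg
        · have ha : 1 ≤ (v j:ℝ) := by rwa [abs_of_nonneg hsg] at hone
          have hsub := sub_le_sub h1 h2
          rw [hvp, hvq] at hsub
          nlinarith [hsub]
        · have ha : (v j:ℝ) ≤ -1 := by rw [abs_of_nonpos hsg] at hone; linarith
          have hsub := sub_le_sub h1' h2'
          rw [hvp, hvq] at hsub
          nlinarith [hsub]
      have hge : ((ε:ℝ) : EReal) ≤ latticeWidth S :=
        le_iInf₂ fun v hv => EReal.coe_le_coe_iff.mpr (hlow v hv.1 hv.2)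
      exact lt_of_lt_of_le (EReal.coe_pos.mpr hε) hge
    · -- finite width
      have hex : ∃ i, f i ≠ 0 ∧ ∀ y ∈ Rec, ∑ j, (f i j : ℝ) * y j = 0 := by
        by_contra hno
        push_neg at hno
        have hst : ∀ i, f i ≠ 0 → ∃ y ∈ Rec, (0:ℝ) < ∑ j, (f i j:ℝ) * y j := by
          intro i hfi
          obtain ⟨y, hy, hne'⟩ := hno i hfi
          exact ⟨y, hy, lt_of_le_of_ne ((hmemR y).mp hy i) (Ne.symm hne')⟩
        have hsp := span_rec_top f Rec hRec hst
        rw [hsp, finrank_top] at hrk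
        simp at hrk
      obtain ⟨i, hfi, hann⟩ := hex
      have hbdd := hDirBdd i hann
      have hle : latticeWidth S ≤ ((dirWidth S (f i) : ℝ) : EReal) :=
        iInf₂_le (f i) ⟨hfi, hbdd⟩
      exact lt_of_le_of_lt hle (EReal.coe_lt_top _)
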